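/- arXiv:2403.15683 — 2 statements merged into one kernel-verified Lean document; each statement's English description precedes it below -/
import Mathlib

section
/- For a connected undirected graph G on N vertices with at least one edge, the potential function Φ(a) = (1/2) aᵀ A a - (θ/N) aᵀ A 𝟙 over a ∈ {0,1}^N attains its maximum only at the all-zeros profile if θ > N/2, only at the all-ones profile if θ < N/2, and exactly at these two profiles (with common value 0) if θ = N/2. In particular the maximizer set is always contained in {𝟘, 𝟙}. -/
open Matrix Finset SimpleGraph

/-- Embedding of binary action profiles into ℝ^N. -/
def emb {N : ℕ} (a : Fin N → Bool) : Fin N → ℝ := fun i => if a i then 1 else 0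

/-- The potential function Φ(a) = (1/2) aᵀ A a - (θ/N) aᵀ A 𝟙. -/
noncomputable def Phi {N : ℕ} (A : Matrix (Fin N) (Fin N) ℝ) (θ : ℝ) (x : Fin N → ℝ) : ℝ :=
  (1 / 2) * (x ⬝ᵥ A.mulVec x) - (θ / N) * (x ⬝ᵥ A.mulVec (fun _ => 1))

section Aux

variable {N : ℕ} (G : SimpleGraph (Fin N)) [DecidableRel G.Adj]

/-- xᵀ A x for x = emb a. -/
noncomputable def Qv (a : Fin N → Bool) : ℝ :=
  ∑ i, ∑ j, G.adjMatrix ℝ i j * emb a i * emb a j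

/-- boundary-type sum. -/
noncomputable def Bv (a : Fin N → Bool) : ℝ :=
  ∑ i, ∑ j, G.adjMatrix ℝ i j * emb a i * (1 - emb a j)

lemma emb_nonneg (a : Fin N → Bool) (i : Fin N) : 0 ≤ emb a i := by
  unfold emb; split <;> norm_num

lemma emb_le_one (a : Fin N → Bool) (i : Fin N) : emb a i ≤ 1 := by
  unfold emb; split <;> norm_num

lemma emb_not (a : Fin N → Bool) (i : Fin N) :
    emb (fun k => !a k) i = 1 - emb a i := by
  cases h : a i <;> simp [emb, h]

lemma adjM_nonneg (i j : Fin N) : 0 ≤ G.adjMatrix ℝ i j := by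
  simp only [SimpleGraph.adjMatrix_apply]; split <;> norm_num

lemma adjM_symm (i j : Fin N) : G.adjMatrix ℝ i j = G.adjMatrix ℝ j i := by
  simp [SimpleGraph.adjMatrix_apply, SimpleGraph.adj_comm]

lemma phi_eq (θ : ℝ) (a : Fin N → Bool) :
    Phi (G.adjMatrix ℝ) θ (emb a)
      = (1 / 2 - θ / N) * Qv G a - (θ / N) * Bv G a := by
  simp only [Phi, Qv, Bv, dotProduct, Matrix.mulVec, Finset.mul_sum,
    ← Finset.sum_sub_distrib]
  refine Finset.sum_congr rfl fun i _ => ?_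
  refine Finset.sum_congr rfl fun j _ => ?_
  ring

lemma Qv_nonneg (a : Fin N → Bool) : 0 ≤ Qv G a := by
  refine Finset.sum_nonneg fun i _ => Finset.sum_nonneg fun j _ => ?_
  exact mul_nonneg (mul_nonneg (adjM_nonneg G i j) (emb_nonneg a i)) (emb_nonneg a j)

lemma Bv_nonneg (a : Fin N → Bool) : 0 ≤ Bv G a := by
  refine Finset.sum_nonneg fun i _ => Finset.sum_nonneg fun j _ => ?_
  exact mul_nonneg (mul_nonneg (adjM_nonneg G i j) (emb_nonneg a i))
    (by linarith [emb_le_one a j])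

lemma Bv_not (a : Fin N → Bool) : Bv G (fun i => !a i) = Bv G a := by
  simp only [Bv, emb_not]
  rw [Finset.sum_comm]
  refine Finset.sum_congr rfl fun u _ => Finset.sum_congr rfl fun v _ => ?_
  rw [adjM_symm G v u]; ring

lemma Tsplit (a : Fin N → Bool) :
    Qv G (fun _ => true)
      = Qv G a + 2 * Bv G a + Qv G (fun i => !a i) := by
  have h : Qv G (fun _ => true)
      = Qv G a + Bv G a + (Bv G (fun i => !a i) + Qv G (fun i => !a i)) := by
    simp only [Qv, Bv, emb_not, ← Finset.sum_add_distrib]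
    refine Finset.sum_congr rfl fun i _ => Finset.sum_congr rfl fun j _ => ?_
    cases hi : a i <;> cases hj : a j <;> simp [emb, hi, hj] <;> ring
  rw [h, Bv_not]; ring

lemma Qv_false : Qv G (fun _ => false) = 0 := by
  simp [Qv, emb]

lemma Bv_false : Bv G (fun _ => false) = 0 := by
  simp [Bv, emb]

lemma Bv_true : Bv G (fun _ => true) = 0 := by
  simp [Bv, emb]

lemma ge_one_double_sum {f : Fin N → Fin N → ℝ} (hnn : ∀ i j, 0 ≤ f i j)
    (u v : Fin N) (h : 1 ≤ f u v) : 1 ≤ ∑ i, ∑ j, f i j := by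
  calc (1:ℝ) ≤ f u v := h
    _ ≤ ∑ j, f u j := Finset.single_le_sum (fun j _ => hnn u j) (Finset.mem_univ v)
    _ ≤ ∑ i, ∑ j, f i j :=
        Finset.single_le_sum (fun i _ => Finset.sum_nonneg fun j _ => hnn i j)
          (Finset.mem_univ u)

lemma Qv_true_ge_one (hedge : ∃ i j, G.Adj i j) : 1 ≤ Qv G (fun _ => true) := by
  obtain ⟨u, v, huv⟩ := hedge
  refine ge_one_double_sum (fun i j => ?_) u v ?_
  · exact mul_nonneg (mul_nonneg (adjM_nonneg G i j) (emb_nonneg _ i)) (emb_nonneg _ j)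
  · simp [emb, huv]

lemma exists_cross_walk (a : Fin N → Bool) :
    ∀ {i j : Fin N}, G.Walk i j → a i = true → a j = false →
      ∃ u v, G.Adj u v ∧ a u = true ∧ a v = false := by
  intro i j w
  induction w with
  | nil => intro h1 h2; rw [h1] at h2; exact absurd h2 (by simp)
  | @cons i k j h p ih =>
    intro h1 h2
    cases hk : a k with
    | true => exact ih hk h2
    | false => exact ⟨i, k, h, h1, hk⟩

lemma Bv_ge_one (hconn : G.Connected) (a : Fin N → Bool)
    (h0 : a ≠ fun _ => false) (h1 : a ≠ fun _ => true) : 1 ≤ Bv G a := by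
  have hi : ∃ i, a i = true := by
    by_contra h; push_neg at h
    exact h0 (funext fun i => by simpa using h i)
  have hj : ∃ j, a j = false := by
    by_contra h; push_neg at h
    exact h1 (funext fun j => by simpa using h j)
  obtain ⟨i, hi⟩ := hi
  obtain ⟨j, hj⟩ := hj
  obtain ⟨w⟩ := hconn.preconnected i j
  obtain ⟨u, v, huv, hu, hv⟩ := exists_cross_walk G a w hi hj
  refine ge_one_double_sum (fun i j => ?_) u v ?_
  · exact mul_nonneg (mul_nonneg (adjM_nonneg G i j) (emb_nonneg a i))
      (by linarith [emb_le_one a j])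
  · simp [emb, huv, hu, hv]

end Aux

theorem stmt_3 (N : ℕ) (hN : 2 ≤ N) (G : SimpleGraph (Fin N)) [DecidableRel G.Adj]
    (hconn : G.Connected) (hedge : ∃ i j, G.Adj i j) (θ : ℝ) :
    (θ > (N : ℝ) / 2 →
      ∀ a : Fin N → Bool,
        (∀ b : Fin N → Bool, Phi (G.adjMatrix ℝ) θ (emb b) ≤ Phi (G.adjMatrix ℝ) θ (emb a)) ↔
          a = fun _ => false) ∧
    (θ < (N : ℝ) / 2 →
      ∀ a : Fin N → Bool,
        (∀ b : Fin N → Bool, Phi (G.adjMatrix ℝ) θ (emb b) ≤ Phi (G.adjMatrix ℝ) θ (emb a)) ↔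
          a = fun _ => true) ∧
    (θ = (N : ℝ) / 2 →
      (∀ a : Fin N → Bool,
        (∀ b : Fin N → Bool, Phi (G.adjMatrix ℝ) θ (emb b) ≤ Phi (G.adjMatrix ℝ) θ (emb a)) ↔
          (a = (fun _ => false) ∨ a = fun _ => true)) ∧
      Phi (G.adjMatrix ℝ) θ (emb (fun _ => false)) = 0 ∧
      Phi (G.adjMatrix ℝ) θ (emb (fun _ => true)) = 0) := by
  have hN0 : (0:ℝ) < N := by
    have : (2:ℝ) ≤ N := by exact_mod_cast hN
    linarith
  have hT : 1 ≤ Qv G (fun _ => true) := Qv_true_ge_one G hedge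
  have hΦf : Phi (G.adjMatrix ℝ) θ (emb (fun _ => false)) = 0 := by
    rw [phi_eq, Qv_false, Bv_false]; ring
  have hΦt : Phi (G.adjMatrix ℝ) θ (emb (fun _ => true))
      = (1 / 2 - θ / N) * Qv G (fun _ => true) := by
    rw [phi_eq, Bv_true]; ring
  refine ⟨?_, ?_, ?_⟩
  · -- θ > N/2
    intro hθ a
    have ht : 1 / 2 < θ / N := by rw [lt_div_iff₀ hN0]; linarith
    have hle : ∀ b : Fin N → Bool, Phi (G.adjMatrix ℝ) θ (emb b) ≤ 0 := by
      intro b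
      rw [phi_eq]
      nlinarith [Qv_nonneg G b, Bv_nonneg G b]
    have hstrict : ∀ b : Fin N → Bool, b ≠ (fun _ => false) →
        Phi (G.adjMatrix ℝ) θ (emb b) < 0 := by
      intro b hb
      by_cases hb1 : b = fun _ => true
      · rw [hb1, hΦt]; nlinarith
      · have h1 := Bv_ge_one G hconn b hb hb1
        rw [phi_eq]
        nlinarith [Qv_nonneg G b]
    constructor
    · intro hmax
      by_contra hne
      have h0 : (0:ℝ) ≤ Phi (G.adjMatrix ℝ) θ (emb a) := by
        have := hmax (fun _ => false); rwa [hΦf] at this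
      exact absurd h0 (not_le.mpr (hstrict a hne))
    · intro ha b; rw [ha, hΦf]; exact hle b
  · -- θ < N/2
    intro hθ a
    have ht : θ / N < 1 / 2 := by rw [div_lt_iff₀ hN0]; linarith
    have hle : ∀ b : Fin N → Bool,
        Phi (G.adjMatrix ℝ) θ (emb b) ≤ Phi (G.adjMatrix ℝ) θ (emb (fun _ => true)) := by
      intro b
      rw [phi_eq, hΦt]
      nlinarith [Tsplit G b, Qv_nonneg G b, Bv_nonneg G b,
        Qv_nonneg G (fun i => !b i)]
    have hstrict : ∀ b : Fin N → Bool, b ≠ (fun _ => true) →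
        Phi (G.adjMatrix ℝ) θ (emb b) < Phi (G.adjMatrix ℝ) θ (emb (fun _ => true)) := by
      intro b hb
      by_cases hb0 : b = fun _ => false
      · rw [hb0, hΦf, hΦt]; nlinarith
      · have h1 := Bv_ge_one G hconn b hb0 hb
        rw [phi_eq, hΦt]
        nlinarith [Tsplit G b, Qv_nonneg G b, Qv_nonneg G (fun i => !b i)]
    constructor
    · intro hmax
      by_contra hne
      have h0 := hmax (fun _ => true)
      exact absurd h0 (not_le.mpr (hstrict a hne))
    · intro ha b; rw [ha]; exact hle b
  · -- θ = N/2
    intro hθ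
    have ht : θ / N = 1 / 2 := by rw [hθ]; field_simp
    have hΦt0 : Phi (G.adjMatrix ℝ) θ (emb (fun _ => true)) = 0 := by
      rw [hΦt, ht]; ring
    have hle : ∀ b : Fin N → Bool, Phi (G.adjMatrix ℝ) θ (emb b) ≤ 0 := by
      intro b
      rw [phi_eq, ht]
      nlinarith [Bv_nonneg G b]
    refine ⟨?_, hΦf, hΦt0⟩
    intro a
    constructor
    · intro hmax
      by_contra hne
      push_neg at hne
      obtain ⟨h0, h1⟩ := hne
      have hB := Bv_ge_one G hconn a h0 h1
      have h2 : (0:ℝ) ≤ Phi (G.adjMatrix ℝ) θ (emb a) := by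
        have := hmax (fun _ => false); rwa [hΦf] at this
      rw [phi_eq, ht] at h2
      nlinarith
    · rintro (ha | ha) b
      · rw [ha, hΦf]; exact hle b
      · rw [ha, hΦt0]; exact hle b
end

section
/- Let G be a connected undirected graph on N vertices with θ < N/2, and let G_s be obtained from G by adding one edge between nonadjacent vertices i and j. Then the Gibbs stationary probability of the all-ones profile strictly increases: μ_{G_s}(𝟙 | β) > μ_G(𝟙 | β) for every β > 0, where μ_G(a|β) = exp(βΦ_G(a)) / Σ_{a'∈{0,1}^N} exp(βΦ_G(a')) and Φ_G(a) = (1/2)aᵀA_G a - (θ/N)aᵀA_G 𝟙. -/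
open Matrix Finset SimpleGraph

/-- Gibbs stationary distribution of log-linear learning with rationality β. -/
noncomputable def mu {N : ℕ} (A : Matrix (Fin N) (Fin N) ℝ) (θ β : ℝ)
    (a : Fin N → Bool) : ℝ :=
  Real.exp (β * Phi A θ (emb a)) /
    ∑ a' : Fin N → Bool, Real.exp (β * Phi A θ (emb a'))

lemma dot_std {N : ℕ} (i j : Fin N) (x y : Fin N → ℝ) :
    x ⬝ᵥ (Matrix.single i j (1:ℝ)).mulVec y = x i * y j := by
  simp [Matrix.mulVec, dotProduct, Matrix.single, ite_and, mul_ite,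
    Finset.mul_sum, Finset.sum_ite_eq]

lemma Phi_add {N : ℕ} (A : Matrix (Fin N) (Fin N) ℝ) (θ : ℝ) (i j : Fin N)
    (x : Fin N → ℝ) :
    Phi (A + Matrix.single i j 1 + Matrix.single j i 1) θ x =
      Phi A θ x + (x i * x j - (θ / N) * (x i + x j)) := by
  simp only [Phi, Matrix.add_mulVec, dotProduct_add, dot_std]
  ring

theorem stmt_7 (N : ℕ) (G : SimpleGraph (Fin N)) [DecidableRel G.Adj]
    (hconn : G.Connected) (θ : ℝ) (hθ : θ < (N : ℝ) / 2)
    (i j : Fin N) (hij : i ≠ j) (hnadj : ¬ G.Adj i j) (β : ℝ) (hβ : 0 < β) :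
    mu (G.adjMatrix ℝ + Matrix.single i j 1 + Matrix.single j i 1) θ β
        (fun _ => true) >
      mu (G.adjMatrix ℝ) θ β (fun _ => true) := by
  have hN : 0 < (N : ℝ) := by
    have : 0 < N := Fin.pos i
    exact_mod_cast this
  set A := G.adjMatrix ℝ with hA
  set c : ℝ := 1 - (θ / N) * 2 with hc
  have hcpos : 0 < c := by
    have : θ / N < 1 / 2 := by
      rw [div_lt_div_iff₀ hN (by norm_num)]
      linarith
    simp only [hc]; linarith
  -- the increment Δ(a) for binary profiles
  have hDelta : ∀ a : Fin N → Bool,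
      Phi (A + Matrix.single i j 1 + Matrix.single j i 1) θ (emb a) ≤
        Phi A θ (emb a) + c := by
    intro a
    rw [Phi_add]
    have hth : -(θ / N) ≤ c := by
      have : θ / N < 1 := by
        rw [div_lt_one hN]; linarith
      simp only [hc]; linarith
    rcases Bool.eq_false_or_eq_true (a i) with hi | hi <;>
      rcases Bool.eq_false_or_eq_true (a j) with hj | hj <;>
      simp [emb, hi, hj] <;> linarith
  have hDtop : Phi (A + Matrix.single i j 1 + Matrix.single j i 1) θ
      (emb (fun _ => true)) = Phi A θ (emb (fun _ => true)) + c := by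
    have he : emb (fun _ : Fin N => true) = fun _ => (1:ℝ) := by
      funext k; simp [emb]
    rw [Phi_add, hc, he]; ring
  have hDbot : Phi (A + Matrix.single i j 1 + Matrix.single j i 1) θ
      (emb (fun _ => false)) = Phi A θ (emb (fun _ => false)) := by
    rw [Phi_add]; simp [emb]
  set A' := A + Matrix.single i j 1 + Matrix.single j i 1 with hA'
  set S : ℝ := ∑ a' : Fin N → Bool, Real.exp (β * Phi A θ (emb a')) with hS
  set S' : ℝ := ∑ a' : Fin N → Bool, Real.exp (β * Phi A' θ (emb a')) with hS'
  have hSpos : 0 < S := Finset.sum_pos (fun a _ => Real.exp_pos _) ⟨fun _ => true, by simp⟩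
  have hS'pos : 0 < S' := Finset.sum_pos (fun a _ => Real.exp_pos _) ⟨fun _ => true, by simp⟩
  have hkey : S' < Real.exp (β * c) * S := by
    rw [hS, Finset.mul_sum]
    apply Finset.sum_lt_sum (s := Finset.univ)
    · intro a _
      rw [← Real.exp_add]
      apply Real.exp_le_exp.2
      have := hDelta a
      nlinarith [hDelta a]
    · refine ⟨fun _ => false, Finset.mem_univ _, ?_⟩
      rw [← Real.exp_add, hDbot]
      apply Real.exp_lt_exp.2
      nlinarith
  unfold mu
  rw [← hS, ← hS', gt_iff_lt, div_lt_div_iff₀ hSpos hS'pos]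
  rw [hDtop, mul_add, Real.exp_add]
  calc Real.exp (β * Phi A θ (emb fun _ => true)) * S'
      < Real.exp (β * Phi A θ (emb fun _ => true)) * (Real.exp (β * c) * S) := by
        exact mul_lt_mul_of_pos_left hkey (Real.exp_pos _)
    _ = Real.exp (β * Phi A θ (emb fun _ => true)) * Real.exp (β * c) * S := by ring
end
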